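/- Let θ be a real number with 0 < θ < π/2. Set P = cos(θ/4)/cos(θ/2), Q = sin(3θ/4)/cos(θ/2), and R = (sin(θ/4)/cos(θ/2)) · Q. Then P + P·Q + (sin(3θ/4)/sin θ)·R + (sin(θ/4)/sin θ)·R = (3·cos(θ/4) + cos(3θ/4) + sin(θ/2) + sin θ + sin(3θ/2)) / (3·cos(θ/2) + cos(3θ/2)). -/

import Mathlib

open Real

theorem theta4kplus3_lower_bound_path_length
    (θ : ℝ) (hθ0 : 0 < θ) (hθ : θ < π / 2) :
    cos (θ / 4) / cos (θ / 2) +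
        (cos (θ / 4) / cos (θ / 2)) * (sin (3 * θ / 4) / cos (θ / 2)) +
        (sin (3 * θ / 4) / sin θ) *
          ((sin (θ / 4) / cos (θ / 2)) * (sin (3 * θ / 4) / cos (θ / 2))) +
        (sin (θ / 4) / sin θ) *
          ((sin (θ / 4) / cos (θ / 2)) * (sin (3 * θ / 4) / cos (θ / 2))) =
      (3 * cos (θ / 4) + cos (3 * θ / 4) + sin (θ / 2) + sin θ + sin (3 * θ / 2)) /
        (3 * cos (θ / 2) + cos (3 * θ / 2)) := by
  obtain ⟨x, rfl⟩ : ∃ x, θ = 4 * x := ⟨θ / 4, by ring⟩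
  have hx0 : 0 < x := by linarith
  have hx : x < π / 8 := by linarith
  have hpi : (0:ℝ) < π := pi_pos
  simp only [show (4:ℝ) * x = 2 * (2 * x) by ring]
  simp only [show 2 * (2 * x) / 4 = x by ring, show 2 * (2 * x) / 2 = 2 * x by ring,
    show 3 * (2 * (2 * x)) / 4 = 3 * x by ring, show 3 * (2 * (2 * x)) / 2 = 3 * (2 * x) by ring]
  have hc2 : 0 < cos (2 * x) := by
    apply cos_pos_of_mem_Ioo; constructor <;> [linarith; linarith]
  have hs4 : 0 < sin (2 * (2 * x)) := by
    apply sin_pos_of_pos_of_lt_pi <;> linarith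
  have hden : 3 * cos (2 * x) + cos (3 * (2 * x)) = 4 * cos (2 * x) ^ 3 := by
    rw [cos_three_mul]; ring
  rw [hden]
  have s2 : sin (2 * x) = 2 * sin x * cos x := sin_two_mul x
  have c2 : cos (2 * x) = 2 * cos x ^ 2 - 1 := cos_two_mul x
  have s3 : sin (3 * x) = 3 * sin x - 4 * sin x ^ 3 := sin_three_mul x
  have c3 : cos (3 * x) = 4 * cos x ^ 3 - 3 * cos x := cos_three_mul x
  have s4 : sin (2 * (2 * x)) = 2 * sin (2 * x) * cos (2 * x) := sin_two_mul (2 * x)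
  have hc2' : cos (2 * x) ≠ 0 := ne_of_gt hc2
  have hs4' : sin (2 * (2 * x)) ≠ 0 := ne_of_gt hs4
  have hcc : cos (2 * x) ^ 3 ≠ 0 := pow_ne_zero _ hc2'
  rw [sin_three_mul (2 * x)]
  rw [s4] at hs4' ⊢
  rw [s2] at hs4' ⊢
  have hsx : sin x ≠ 0 := (sin_pos_of_pos_of_lt_pi hx0 (by linarith)).ne'
  have hcx : cos x ≠ 0 := (cos_pos_of_mem_Ioo ⟨by linarith, by linarith⟩).ne'
  rw [s3, c2, c3]
  rw [c2] at hc2' hcc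
  field_simp
  congr 1
  linear_combination ((64 * sin x ^ 4) + (-64 * sin x ^ 2 * cos x ^ 2) + (-48 * sin x ^ 2) + (64 * sin x * cos x ^ 2) + (64 * cos x ^ 4) + (-16 * cos x ^ 2)) * sin_sq_add_cos_sq x
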